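/- arXiv:2601.18029 — 3 statements merged into one kernel-verified Lean document; each statement's English description precedes it below -/
import Mathlib

section
/- Let N > 0 be real and set h = (π/ln η)²/(N² + r_i²) + 1/N². Let W : [r_i, r_o] → ℝ be continuous with W(r) > h for all r ∈ [r_i, r_o], and define g : [r_i, r_o] → ℝ by g(r) = sin( π·ln(r_i/r)/ln η ). Then ∫_{r_i}^{r_o} (r/(N² + r²))·g'(r)² dr − ∫_{r_i}^{r_o} W(r)·g(r)²/r dr < −(1/N²)·∫_{r_i}^{r_o} g(r)²/r dr. (Equivalently, the Rayleigh quotient R of the trial function ψ = g/r satisfies R(ψ) < −1/N², the key inequality giving the hurdle constant h of the instability theorem for annular flows.) -/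
open Real MeasureTheory

/-- Key trial-function inequality behind the hurdle theorem for annular
flows: if `W > h = (π/ln η)²/(N² + ri²) + 1/N²` on `[ri, ro]`, then the
Rayleigh quotient of the trial function `ψ = g/r`, with
`g(r) = sin(π ln(ri/r)/ln η)`, is below `-1/N²`. -/
theorem stmt_10
    (ri ro : ℝ) (hri : 0 < ri) (hio : ri < ro)
    (N : ℝ) (hN : 0 < N)
    (h : ℝ)
    (hh : h = (Real.pi / Real.log (ri / ro)) ^ 2 / (N ^ 2 + ri ^ 2) + 1 / N ^ 2)
    (W : ℝ → ℝ) (hWc : ContinuousOn W (Set.Icc ri ro))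
    (hW : ∀ r ∈ Set.Icc ri ro, h < W r)
    (g : ℝ → ℝ)
    (hg : ∀ r, g r = Real.sin (Real.pi * Real.log (ri / r) / Real.log (ri / ro))) :
    (∫ r in ri..ro, (r / (N ^ 2 + r ^ 2)) * (deriv g r) ^ 2)
        - (∫ r in ri..ro, W r * (g r) ^ 2 / r)
      < -(1 / N ^ 2) * ∫ r in ri..ro, (g r) ^ 2 / r := by
  have hro : 0 < ro := hri.trans hio
  set L : ℝ := Real.log (ri / ro) with hLdef
  have hLneg : L < 0 := Real.log_neg (div_pos hri hro) ((div_lt_one hro).mpr hio)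
  have hLne : L ≠ 0 := hLneg.ne
  set θ : ℝ → ℝ := fun r => Real.pi * Real.log (ri / r) / L with hθdef
  have hgθ : g = fun r => Real.sin (θ r) := funext hg
  subst hgθ
  -- derivative of θ
  have hθd : ∀ r : ℝ, 0 < r → HasDerivAt θ (-(Real.pi / (L * r))) r := by
    intro r hr
    have h1 : HasDerivAt (fun x : ℝ => ri / x) (ri * (-(r ^ 2)⁻¹)) r := by
      simpa [div_eq_mul_inv] using (hasDerivAt_inv hr.ne').const_mul ri
    have h2 : HasDerivAt (fun x : ℝ => Real.log (ri / x))
        ((ri / r)⁻¹ * (ri * (-(r ^ 2)⁻¹))) r :=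
      (Real.hasDerivAt_log (div_pos hri hr).ne').comp r h1
    have h3 := (h2.const_mul Real.pi).div_const L
    refine h3.congr_deriv ?_
    field_simp
  -- derivative of g
  have hgd : ∀ r : ℝ, 0 < r →
      HasDerivAt (fun x => Real.sin (θ x)) (Real.cos (θ r) * (-(Real.pi / (L * r)))) r := by
    intro r hr
    exact (Real.hasDerivAt_sin (θ r)).comp r (hθd r hr)
  -- continuity of θ on [ri, ro]
  have hθc : ContinuousOn θ (Set.Icc ri ro) := by
    apply ContinuousOn.div_const
    apply ContinuousOn.mul continuousOn_const
    apply ContinuousOn.log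
    · exact continuousOn_const.div continuousOn_id (fun x hx => (hri.trans_le hx.1).ne')
    · intro x hx
      exact (div_pos hri (hri.trans_le hx.1)).ne'
  have hrc : ContinuousOn (fun r : ℝ => r⁻¹) (Set.Icc ri ro) :=
    continuousOn_inv₀.mono (fun x hx => (hri.trans_le hx.1).ne')
  have hθri : θ ri = 0 := by
    simp [hθdef, div_self hri.ne']
  have hθro : θ ro = Real.pi := by
    simp only [hθdef, ← hLdef]
    field_simp
  -- integrability facts
  have hgc : ContinuousOn (fun r => Real.sin (θ r)) (Set.Icc ri ro) :=
    Real.continuous_sin.comp_continuousOn hθc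
  have hcc : ContinuousOn (fun r => Real.cos (θ r)) (Set.Icc ri ro) :=
    Real.continuous_cos.comp_continuousOn hθc
  have hIc : IntervalIntegrable (fun r => Real.cos (θ r) ^ 2 / r) volume ri ro := by
    apply ContinuousOn.intervalIntegrable
    rw [Set.uIcc_of_le hio.le]
    exact ((hcc.pow 2).mul hrc).congr (fun x hx => (div_eq_mul_inv _ _))
  have hIs : IntervalIntegrable (fun r => Real.sin (θ r) ^ 2 / r) volume ri ro := by
    apply ContinuousOn.intervalIntegrable
    rw [Set.uIcc_of_le hio.le]
    exact ((hgc.pow 2).mul hrc).congr (fun x hx => (div_eq_mul_inv _ _))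
  -- Key: ∫ cos²θ/r = ∫ sin²θ/r
  have hkey : (∫ r in ri..ro, Real.cos (θ r) ^ 2 / r)
      = ∫ r in ri..ro, Real.sin (θ r) ^ 2 / r := by
    have hF : ∀ r ∈ Set.uIcc ri ro,
        HasDerivAt (fun x => -L / (2 * Real.pi) * Real.sin (2 * θ x))
          ((Real.cos (θ r) ^ 2 - Real.sin (θ r) ^ 2) / r) r := by
      intro r hr
      rw [Set.uIcc_of_le hio.le] at hr
      have hrpos : 0 < r := hri.trans_le hr.1
      have h1 : HasDerivAt (fun x => 2 * θ x) (2 * (-(Real.pi / (L * r)))) r :=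
        (hθd r hrpos).const_mul 2
      have h2 := ((Real.hasDerivAt_sin (2 * θ r)).comp r h1).const_mul (-L / (2 * Real.pi))
      refine h2.congr_deriv ?_
      rw [← Real.cos_two_mul']
      field_simp
    have hsubint : IntervalIntegrable
        (fun r => (Real.cos (θ r) ^ 2 - Real.sin (θ r) ^ 2) / r) volume ri ro := by
      apply ContinuousOn.intervalIntegrable
      rw [Set.uIcc_of_le hio.le]
      exact ((hcc.pow 2).sub (hgc.pow 2)).div continuousOn_id
        (fun x hx => (hri.trans_le hx.1).ne')
    have h0 : (∫ r in ri..ro, (Real.cos (θ r) ^ 2 - Real.sin (θ r) ^ 2) / r) = 0 := by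
      rw [intervalIntegral.integral_eq_sub_of_hasDerivAt hF hsubint]
      simp [hθri, hθro]
    have hsplit : (∫ r in ri..ro, (Real.cos (θ r) ^ 2 - Real.sin (θ r) ^ 2) / r)
        = (∫ r in ri..ro, Real.cos (θ r) ^ 2 / r) - ∫ r in ri..ro, Real.sin (θ r) ^ 2 / r := by
      rw [← intervalIntegral.integral_sub hIc hIs]
      apply intervalIntegral.integral_congr
      intro x hx
      simp [sub_div]
    linarith [hsplit ▸ h0]
  -- Bound the first integral
  set A : ℝ := (Real.pi / L) ^ 2 / (N ^ 2 + ri ^ 2) with hAdef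
  have hB : (∫ r in ri..ro, (r / (N ^ 2 + r ^ 2)) * (deriv (fun x => Real.sin (θ x)) r) ^ 2)
      ≤ A * ∫ r in ri..ro, Real.cos (θ r) ^ 2 / r := by
    rw [← intervalIntegral.integral_const_mul]
    have hcongr : Set.EqOn
        (fun r => (r / (N ^ 2 + r ^ 2)) * (deriv (fun x => Real.sin (θ x)) r) ^ 2)
        (fun r => (r / (N ^ 2 + r ^ 2)) * (Real.cos (θ r) * (-(Real.pi / (L * r)))) ^ 2)
        (Set.uIcc ri ro) := by
      intro r hr
      rw [Set.uIcc_of_le hio.le] at hr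
      simp only
      rw [(hgd r (hri.trans_le hr.1)).deriv]
    rw [intervalIntegral.integral_congr hcongr]
    apply intervalIntegral.integral_mono_on hio.le
    · apply ContinuousOn.intervalIntegrable
      rw [Set.uIcc_of_le hio.le]
      apply ContinuousOn.mul
      · exact (continuousOn_id.div (by fun_prop) (fun x hx => by positivity))
      · apply ContinuousOn.pow
        apply ContinuousOn.mul hcc
        apply ContinuousOn.neg
        exact continuousOn_const.div (continuousOn_const.mul continuousOn_id)
          (fun x hx => mul_ne_zero hLne (hri.trans_le hx.1).ne')
    · apply ContinuousOn.intervalIntegrable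
      rw [Set.uIcc_of_le hio.le]
      exact continuousOn_const.mul ((hcc.pow 2).div continuousOn_id
        (fun x hx => (hri.trans_le hx.1).ne'))
    · intro r hr
      have hrpos : 0 < r := hri.trans_le hr.1
      have hd2 : N ^ 2 + ri ^ 2 ≤ N ^ 2 + r ^ 2 := by nlinarith [hr.1, hri.le]
      have e1 : (r / (N ^ 2 + r ^ 2)) * (Real.cos (θ r) * (-(Real.pi / (L * r)))) ^ 2
          = Real.pi ^ 2 * Real.cos (θ r) ^ 2 / (L ^ 2 * (r * (N ^ 2 + r ^ 2))) := by
        have h1 : N ^ 2 + r ^ 2 ≠ 0 := by positivity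
        field_simp
      have e2 : A * (Real.cos (θ r) ^ 2 / r)
          = Real.pi ^ 2 * Real.cos (θ r) ^ 2 / (L ^ 2 * (r * (N ^ 2 + ri ^ 2))) := by
        have h1 : N ^ 2 + ri ^ 2 ≠ 0 := by positivity
        rw [hAdef]
        field_simp
      rw [e1, e2]
      gcongr
  -- Lower bound for the W integral
  have hD : h * (∫ r in ri..ro, Real.sin (θ r) ^ 2 / r)
      < ∫ r in ri..ro, W r * Real.sin (θ r) ^ 2 / r := by
    have hIW : IntervalIntegrable (fun r => W r * Real.sin (θ r) ^ 2 / r) volume ri ro := by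
      apply ContinuousOn.intervalIntegrable
      rw [Set.uIcc_of_le hio.le]
      exact (hWc.mul (hgc.pow 2)).div continuousOn_id (fun x hx => (hri.trans_le hx.1).ne')
    have hpos : 0 < ∫ r in ri..ro, (W r - h) * (Real.sin (θ r) ^ 2 / r) := by
      apply intervalIntegral.intervalIntegral_pos_of_pos_on
      · apply ContinuousOn.intervalIntegrable
        rw [Set.uIcc_of_le hio.le]
        exact (hWc.sub continuousOn_const).mul ((hgc.pow 2).div continuousOn_id
          (fun x hx => (hri.trans_le hx.1).ne'))
      · intro x hx
        have hxpos : 0 < x := hri.trans hx.1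
        have hWx : 0 < W x - h := sub_pos.mpr (hW x ⟨hx.1.le, hx.2.le⟩)
        have hlx : Real.log (ri / x) < 0 :=
          Real.log_neg (div_pos hri hxpos) ((div_lt_one hxpos).mpr hx.1)
        have hlx2 : L < Real.log (ri / x) :=
          Real.log_lt_log (div_pos hri hro) (div_lt_div_of_pos_left hri hxpos hx.2)
        have hθpos : 0 < θ x := by
          rw [hθdef]
          exact div_pos_iff.mpr (Or.inr ⟨mul_neg_of_pos_of_neg Real.pi_pos hlx, hLneg⟩)
        have hθlt : θ x < Real.pi := by
          rw [hθdef, div_lt_iff_of_neg hLneg]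
          nlinarith [Real.pi_pos]
        have hsx : 0 < Real.sin (θ x) := Real.sin_pos_of_pos_of_lt_pi hθpos hθlt
        positivity
      · exact hio
    have hsplit : (∫ r in ri..ro, W r * Real.sin (θ r) ^ 2 / r)
        = (∫ r in ri..ro, (W r - h) * (Real.sin (θ r) ^ 2 / r))
          + ∫ r in ri..ro, h * (Real.sin (θ r) ^ 2 / r) := by
      rw [← intervalIntegral.integral_add]
      · apply intervalIntegral.integral_congr
        intro x hx
        simp only
        ring
      · apply ContinuousOn.intervalIntegrable
        rw [Set.uIcc_of_le hio.le]
        exact (hWc.sub continuousOn_const).mul ((hgc.pow 2).div continuousOn_id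
          (fun x hx => (hri.trans_le hx.1).ne'))
      · exact hIs.const_mul h
    rw [hsplit, intervalIntegral.integral_const_mul]
    linarith
  -- combine
  have hfin : A * (∫ r in ri..ro, Real.sin (θ r) ^ 2 / r)
      - h * (∫ r in ri..ro, Real.sin (θ r) ^ 2 / r)
      = -(1 / N ^ 2) * ∫ r in ri..ro, Real.sin (θ r) ^ 2 / r := by
    rw [hh]
    ring
  simp only
  rw [hkey] at hB
  linarith
end

section
/- Let N > 0 and p ≥ 2 be real numbers, and set ρ_N = ((3N² + 1)²/2)·ln((N² + 1)/N²) − 3(6N² + 1)/4, ρ_p = 8/((p + 2)(p + 4)(p + 6)), and C = (ρ_N + 1/(6N²))/ρ_p. Let W : [0, 1] → ℝ be continuous with W(r) > C·r^p for all r ∈ (0, 1). Then ∫₀¹ (r/(N² + r²))·(1 − 3r²)² dr − ∫₀¹ W(r)·r·(1 − r²)² dr < −1/(6N²). (This is the key trial-function inequality, with ψ(r) = 1 − r² so that (rψ)' = 1 − 3r² and ∫₀¹ r·ψ² dr = 1/6, giving the power-law hurdle C·r^p of the instability theorem for pipe flows.) -/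
open Real MeasureTheory

/-- Key trial-function inequality behind the power-law hurdle theorem for
pipe flows, with trial function `ψ(r) = 1 - r²` (so `(rψ)' = 1 - 3r²` and
`∫₀¹ r ψ² dr = 1/6`): if `W(r) > C r^p` on `(0,1)`, then the Rayleigh-quotient
expression is below `-1/(6N²)`. -/
theorem stmt_11
    (N p : ℝ) (hN : 0 < N) (hp : 2 ≤ p)
    (ρN ρp C : ℝ)
    (hρN : ρN = (3 * N ^ 2 + 1) ^ 2 / 2 * Real.log ((N ^ 2 + 1) / N ^ 2)
        - 3 * (6 * N ^ 2 + 1) / 4)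
    (hρp : ρp = 8 / ((p + 2) * (p + 4) * (p + 6)))
    (hC : C = (ρN + 1 / (6 * N ^ 2)) / ρp)
    (W : ℝ → ℝ) (hWc : ContinuousOn W (Set.Icc 0 1))
    (hW : ∀ r ∈ Set.Ioo (0 : ℝ) 1, C * r ^ p < W r) :
    (∫ r in (0:ℝ)..1, (r / (N ^ 2 + r ^ 2)) * (1 - 3 * r ^ 2) ^ 2)
        - (∫ r in (0:ℝ)..1, W r * r * (1 - r ^ 2) ^ 2)
      < -(1 / (6 * N ^ 2)) := by
  have hN2 : (0:ℝ) < N ^ 2 := by positivity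
  -- continuity of the first integrand
  have hden : ∀ x : ℝ, N ^ 2 + x ^ 2 ≠ 0 := fun x => by positivity
  have hcont1 : Continuous (fun r : ℝ => (r / (N ^ 2 + r ^ 2)) * (1 - 3 * r ^ 2) ^ 2) := by
    apply Continuous.mul
    · exact continuous_id.div (by fun_prop) hden
    · fun_prop
  -- First integral equals ρN
  have hI1 : (∫ r in (0:ℝ)..1, (r / (N ^ 2 + r ^ 2)) * (1 - 3 * r ^ 2) ^ 2) = ρN := by
    set F : ℝ → ℝ := fun r => (9/4) * (r ^ 2 + N ^ 2) ^ 2 - (9 * N ^ 2 + 3) * (r ^ 2 + N ^ 2)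
        + (3 * N ^ 2 + 1) ^ 2 / 2 * Real.log (r ^ 2 + N ^ 2) with hF
    have hderiv : ∀ x ∈ Set.uIcc (0:ℝ) 1,
        HasDerivAt F ((x / (N ^ 2 + x ^ 2)) * (1 - 3 * x ^ 2) ^ 2) x := by
      intro x _
      have hv0 : x ^ 2 + N ^ 2 ≠ 0 := by positivity
      have hv : HasDerivAt (fun r : ℝ => r ^ 2 + N ^ 2) (2 * x) x := by
        simpa using (hasDerivAt_pow 2 x).add_const (N ^ 2)
      have h1 : HasDerivAt (fun r : ℝ => (9/4) * (r ^ 2 + N ^ 2) ^ 2)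
          ((9/4) * (2 * (x ^ 2 + N ^ 2) ^ 1 * (2 * x))) x := (hv.pow 2).const_mul _
      have h2 : HasDerivAt (fun r : ℝ => (9 * N ^ 2 + 3) * (r ^ 2 + N ^ 2))
          ((9 * N ^ 2 + 3) * (2 * x)) x := hv.const_mul _
      have h3 : HasDerivAt (fun r : ℝ => (3 * N ^ 2 + 1) ^ 2 / 2 * Real.log (r ^ 2 + N ^ 2))
          ((3 * N ^ 2 + 1) ^ 2 / 2 * ((2 * x) / (x ^ 2 + N ^ 2))) x :=
        (hv.log hv0).const_mul _
      have := (h1.sub h2).add h3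
      convert this using 1
      · rfl
      · rfl
      · rfl
      field_simp
      ring
    have hint : IntervalIntegrable (fun r : ℝ => (r / (N ^ 2 + r ^ 2)) * (1 - 3 * r ^ 2) ^ 2)
        MeasureTheory.volume 0 1 := hcont1.intervalIntegrable 0 1
    rw [intervalIntegral.integral_eq_sub_of_hasDerivAt hderiv hint, hρN]
    simp only [hF, one_pow]
    rw [show (1:ℝ) + N ^ 2 = N ^ 2 + 1 by ring, show ((0:ℝ)) ^ 2 + N ^ 2 = N ^ 2 by ring,
      Real.log_div (by positivity) (by positivity)]
    ring
  -- ρp is positive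
  have hp2 : (0:ℝ) < p + 2 := by linarith
  have hp4 : (0:ℝ) < p + 4 := by linarith
  have hp6 : (0:ℝ) < p + 6 := by linarith
  have hρp_pos : 0 < ρp := by rw [hρp]; positivity
  -- ∫ r^p * r * (1-r²)² = ρp
  have hIp : (∫ r in (0:ℝ)..1, r ^ p * r * (1 - r ^ 2) ^ 2) = ρp := by
    have heq : Set.EqOn (fun r : ℝ => r ^ p * r * (1 - r ^ 2) ^ 2)
        (fun r : ℝ => r ^ (p+1) - 2 * r ^ (p+3) + r ^ (p+5)) (Set.uIcc (0:ℝ) 1) := by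
      intro r hr
      rcases eq_or_ne r 0 with h0 | h0
      · subst h0
        simp [Real.zero_rpow (by linarith : p ≠ 0),
          Real.zero_rpow (by linarith : p + 1 ≠ 0),
          Real.zero_rpow (by linarith : p + 3 ≠ 0),
          Real.zero_rpow (by linarith : p + 5 ≠ 0)]
      · have e3 : p + 3 = p + 1 + 1 + 1 := by ring
        have e5 : p + 5 = p + 1 + 1 + 1 + 1 + 1 := by ring
        simp only [e3, e5, Real.rpow_add_one h0]
        ring
    rw [intervalIntegral.integral_congr heq]
    have i1 : IntervalIntegrable (fun r : ℝ => r ^ (p+1)) MeasureTheory.volume 0 1 :=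
      intervalIntegral.intervalIntegrable_rpow' (by linarith)
    have i3 : IntervalIntegrable (fun r : ℝ => r ^ (p+3)) MeasureTheory.volume 0 1 :=
      intervalIntegral.intervalIntegrable_rpow' (by linarith)
    have i5 : IntervalIntegrable (fun r : ℝ => r ^ (p+5)) MeasureTheory.volume 0 1 :=
      intervalIntegral.intervalIntegrable_rpow' (by linarith)
    rw [intervalIntegral.integral_add ((i1.sub (i3.const_mul 2))) i5,
        intervalIntegral.integral_sub i1 (i3.const_mul 2),
        intervalIntegral.integral_const_mul,
        integral_rpow (Or.inl (by linarith)),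
        integral_rpow (Or.inl (by linarith)),
        integral_rpow (Or.inl (by linarith))]
    rw [Real.one_rpow, Real.one_rpow, Real.one_rpow,
        Real.zero_rpow (by linarith : p + 1 + 1 ≠ 0),
        Real.zero_rpow (by linarith : p + 3 + 1 ≠ 0),
        Real.zero_rpow (by linarith : p + 5 + 1 ≠ 0), hρp]
    field_simp
    ring
  -- strict inequality for the second integral
  have hc2 : Continuous (fun r : ℝ => (1 - r ^ 2) ^ 2) := by fun_prop
  have hrp : ContinuousOn (fun r : ℝ => r ^ p) (Set.Icc (0:ℝ) 1) :=
    ContinuousOn.rpow_const continuousOn_id (fun x _ => Or.inr (by linarith))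
  have hcontp : ContinuousOn (fun r : ℝ => C * r ^ p * r * (1 - r ^ 2) ^ 2) (Set.Icc 0 1) :=
    (((continuousOn_const.mul hrp).mul continuousOn_id).mul hc2.continuousOn)
  have hcontW : ContinuousOn (fun r : ℝ => W r * r * (1 - r ^ 2) ^ 2) (Set.Icc 0 1) :=
    (hWc.mul continuousOn_id).mul hc2.continuousOn
  have hiW : IntervalIntegrable (fun r : ℝ => W r * r * (1 - r ^ 2) ^ 2)
      MeasureTheory.volume 0 1 := by
    apply ContinuousOn.intervalIntegrable
    rwa [Set.uIcc_of_le (by norm_num : (0:ℝ) ≤ 1)]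
  have hiC : IntervalIntegrable (fun r : ℝ => C * r ^ p * r * (1 - r ^ 2) ^ 2)
      MeasureTheory.volume 0 1 := by
    apply ContinuousOn.intervalIntegrable
    rwa [Set.uIcc_of_le (by norm_num : (0:ℝ) ≤ 1)]
  have hdiff : IntervalIntegrable
      (fun r : ℝ => W r * r * (1 - r ^ 2) ^ 2 - C * r ^ p * r * (1 - r ^ 2) ^ 2)
      MeasureTheory.volume 0 1 := hiW.sub hiC
  have hpos : (0:ℝ) < ∫ r in (0:ℝ)..1,
      (W r * r * (1 - r ^ 2) ^ 2 - C * r ^ p * r * (1 - r ^ 2) ^ 2) := by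
    apply intervalIntegral.intervalIntegral_pos_of_pos_on hdiff
    · intro x hx
      have h1 : C * x ^ p < W x := hW x hx
      have h2 : 0 < x * (1 - x ^ 2) ^ 2 := by
        have : x ^ 2 < 1 := by nlinarith [hx.1, hx.2]
        have h4 : (0:ℝ) < (1 - x ^ 2) := by linarith
        exact mul_pos hx.1 (pow_pos h4 2)
      nlinarith
    · norm_num
  rw [intervalIntegral.integral_sub hiW hiC] at hpos
  have hIC : (∫ r in (0:ℝ)..1, C * r ^ p * r * (1 - r ^ 2) ^ 2) = C * ρp := by
    have : (fun r : ℝ => C * r ^ p * r * (1 - r ^ 2) ^ 2)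
        = fun r : ℝ => C * (r ^ p * r * (1 - r ^ 2) ^ 2) := by funext r; ring
    rw [this, intervalIntegral.integral_const_mul, hIp]
  rw [hIC] at hpos
  have hCρp : C * ρp = ρN + 1 / (6 * N ^ 2) := by
    rw [hC]; field_simp
  rw [hI1]
  rw [hCρp] at hpos
  linarith
end

section
/- The improper integral satisfies ∫₀^∞ [ r·(1 − 3r²)²/(1 + r²)⁶ + r/(1 + r²)⁴ − 72·r³/( (1 + r²)⁶·(2r² + 5) ) ] dr < 0. (For the Schlichting jet U(r) = (1 + r²)^{−2} one has (r·U(r))' = (1 − 3r²)/(1 + r²)³, so this is the large-N instability criterion ∫₀^∞ { r·((rU)')² + ((rU')'/(U − 4/9))·(rU)² + r·U² } dr < 0 evaluated with trial function ψ = U, establishing instability of the Schlichting jet.) -/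
open Real MeasureTheory Filter Set Topology

private lemma ht_deriv (x : ℝ) : HasDerivAt (fun x : ℝ => 1 + x ^ 2) (2 * x) x := by
  simpa using (hasDerivAt_pow 2 x).const_add 1

private lemma ht2_deriv (x : ℝ) : HasDerivAt (fun x : ℝ => 2 * x ^ 2 + 5) (2 * (2 * x)) x := by
  simpa using ((hasDerivAt_pow 2 x).const_mul 2).add_const 5

private lemma tpos (x : ℝ) : (0:ℝ) < 1 + x ^ 2 := by positivity
private lemma t2pos (x : ℝ) : (0:ℝ) < 2 * x ^ 2 + 5 := by positivity

private lemma base_atTop : Tendsto (fun x : ℝ => 1 + x ^ 2) atTop atTop :=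
  tendsto_atTop_add_const_left _ 1 (tendsto_pow_atTop two_ne_zero)

private lemma inv_pow_tendsto (n : ℕ) (hn : n ≠ 0) :
    Tendsto (fun x : ℝ => (((1 + x ^ 2) ^ n : ℝ))⁻¹) atTop (𝓝 0) :=
  Tendsto.inv_tendsto_atTop ((tendsto_pow_atTop hn).comp base_atTop)

private noncomputable def G1 (x : ℝ) : ℝ :=
  (-8/5) * ((1 + x ^ 2) ^ 5)⁻¹ + 3 * ((1 + x ^ 2) ^ 4)⁻¹ + (-3/2) * ((1 + x ^ 2) ^ 3)⁻¹

private noncomputable def G2 (x : ℝ) : ℝ := (-1/6) * ((1 + x ^ 2) ^ 3)⁻¹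

private noncomputable def G3 (x : ℝ) : ℝ :=
  (12/5) * ((1 + x ^ 2) ^ 5)⁻¹ + (-5) * ((1 + x ^ 2) ^ 4)⁻¹ + (40/9) * ((1 + x ^ 2) ^ 3)⁻¹
    + (-40/9) * ((1 + x ^ 2) ^ 2)⁻¹ + (160/27) * ((1 + x ^ 2) ^ 1)⁻¹
    + (320/81) * (Real.log (1 + x ^ 2) - Real.log (2 * x ^ 2 + 5))

private lemma inv_pow_deriv (n : ℕ) (x : ℝ) :
    HasDerivAt (fun x : ℝ => (((1 + x ^ 2) ^ n : ℝ))⁻¹)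
      (-((n : ℝ) * (1 + x ^ 2) ^ (n - 1) * (2 * x)) / ((1 + x ^ 2) ^ n) ^ 2) x :=
  ((ht_deriv x).pow n).inv (pow_ne_zero _ (tpos x).ne')

private lemma hG1 (x : ℝ) :
    HasDerivAt G1 (x * (1 - 3 * x ^ 2) ^ 2 / (1 + x ^ 2) ^ 6) x := by
  have H := (((inv_pow_deriv 5 x).const_mul (-8/5)).add
      ((inv_pow_deriv 4 x).const_mul 3)).add ((inv_pow_deriv 3 x).const_mul (-3/2))
  refine H.congr_deriv ?_
  have h := (tpos x).ne'
  field_simp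
  ring

private lemma hG2 (x : ℝ) : HasDerivAt G2 (x / (1 + x ^ 2) ^ 4) x := by
  have H := (inv_pow_deriv 3 x).const_mul (-1/6)
  refine H.congr_deriv ?_
  have h := (tpos x).ne'
  field_simp
  ring

private lemma hG3 (x : ℝ) :
    HasDerivAt G3 (72 * x ^ 3 / ((1 + x ^ 2) ^ 6 * (2 * x ^ 2 + 5))) x := by
  have Hlog := (((ht_deriv x).log (tpos x).ne').sub
      ((ht2_deriv x).log (t2pos x).ne')).const_mul (320/81)
  have H := ((((((inv_pow_deriv 5 x).const_mul (12/5)).add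
      ((inv_pow_deriv 4 x).const_mul (-5))).add
      ((inv_pow_deriv 3 x).const_mul (40/9))).add
      ((inv_pow_deriv 2 x).const_mul (-40/9))).add
      ((inv_pow_deriv 1 x).const_mul (160/27))).add Hlog
  refine H.congr_deriv ?_
  have h := (tpos x).ne'
  have h2 := (t2pos x).ne'
  field_simp
  ring

private lemma tG1 : Tendsto G1 atTop (𝓝 0) := by
  have := (((inv_pow_tendsto 5 (by norm_num)).const_mul (-8/5)).add
      ((inv_pow_tendsto 4 (by norm_num)).const_mul 3)).add
      ((inv_pow_tendsto 3 (by norm_num)).const_mul (-3/2))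
  simp at this; exact this

private lemma tG2 : Tendsto G2 atTop (𝓝 0) := by
  have := (inv_pow_tendsto 3 (by norm_num)).const_mul (-1/6)
  simp at this; exact this

private lemma tG3 : Tendsto G3 atTop (𝓝 ((320/81) * (-Real.log 2))) := by
  have hrat : Tendsto (fun x : ℝ => (1 + x ^ 2) / (2 * x ^ 2 + 5)) atTop (𝓝 (1/2)) := by
    have hden : Tendsto (fun x : ℝ => 2 * x ^ 2 + 5) atTop atTop :=
      tendsto_atTop_add_const_right _ 5
        (Tendsto.const_mul_atTop (by norm_num) (tendsto_pow_atTop two_ne_zero))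
    have h0 : Tendsto (fun x : ℝ => (1:ℝ)/2 - (3/2) / (2 * x ^ 2 + 5)) atTop (𝓝 (1/2)) := by
      simpa using tendsto_const_nhds.sub (Tendsto.div_atTop tendsto_const_nhds hden)
    refine h0.congr fun x => ?_
    have h2 := (t2pos x).ne'
    field_simp
    ring
  have hlog : Tendsto (fun x : ℝ => Real.log (1 + x ^ 2) - Real.log (2 * x ^ 2 + 5))
      atTop (𝓝 (-Real.log 2)) := by
    have hcomp := ((Real.continuousAt_log (by norm_num : (1/2:ℝ) ≠ 0)).tendsto).comp hrat
    have : Real.log (1/2 : ℝ) = -Real.log 2 := by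
      rw [one_div, Real.log_inv]
    rw [this] at hcomp
    refine hcomp.congr fun x => ?_
    simp only [Function.comp]
    rw [Real.log_div (tpos x).ne' (t2pos x).ne']
  have := (((((((inv_pow_tendsto 5 (by norm_num)).const_mul (12/5)).add
      ((inv_pow_tendsto 4 (by norm_num)).const_mul (-5))).add
      ((inv_pow_tendsto 3 (by norm_num)).const_mul (40/9))).add
      ((inv_pow_tendsto 2 (by norm_num)).const_mul (-40/9))).add
      ((inv_pow_tendsto 1 (by norm_num)).const_mul (160/27))).add
      (hlog.const_mul (320/81)))
  simp only [mul_zero, zero_add] at this; exact this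

private lemma log_bound : (291/320 : ℝ) < Real.log 5 - Real.log 2 := by
  have e9 : Real.exp 1 < 2.7182818286 := Real.exp_one_lt_d9
  have h21 : Real.exp 21 < (2.5:ℝ) ^ (23:ℕ) := by
    have h : Real.exp 21 = Real.exp 1 ^ (21:ℕ) := by
      rw [← Real.exp_nat_mul]; norm_num
    rw [h]
    calc Real.exp 1 ^ (21:ℕ) < 2.7182818286 ^ (21:ℕ) :=
          pow_lt_pow_left₀ e9 (Real.exp_pos 1).le (by norm_num)
      _ < (2.5:ℝ) ^ (23:ℕ) := by norm_num
  have h2 : (21:ℝ) < Real.log ((2.5:ℝ) ^ (23:ℕ)) :=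
    (Real.lt_log_iff_exp_lt (by positivity)).2 h21
  rw [Real.log_pow] at h2
  have h3 : Real.log 2.5 = Real.log 5 - Real.log 2 := by
    rw [show (2.5:ℝ) = 5/2 by norm_num, Real.log_div (by norm_num) (by norm_num)]
  rw [h3] at h2
  push_cast at h2
  linarith

/-- Large-`N` instability criterion for the Schlichting jet
`U(r) = (1 + r²)^(-2)`, evaluated with the trial function `ψ = U` (so that
`(rU)' = (1 - 3r²)/(1 + r²)³`): the integral
`∫₀^∞ { r ((rU)')² + ((rU')'/(U - 4/9)) (rU)² + r U² } dr` is negative,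
establishing instability of the Schlichting jet. -/
theorem stmt_19 :
    (∫ r in Set.Ioi (0 : ℝ),
        (r * (1 - 3 * r ^ 2) ^ 2 / (1 + r ^ 2) ^ 6
          + r / (1 + r ^ 2) ^ 4
          - 72 * r ^ 3 / ((1 + r ^ 2) ^ 6 * (2 * r ^ 2 + 5)))) < 0 := by
  have n1 : ∀ x ∈ Set.Ioi (0:ℝ), 0 ≤ x * (1 - 3 * x ^ 2) ^ 2 / (1 + x ^ 2) ^ 6 := by
    intro x hx
    have hx' : (0:ℝ) < x := hx
    positivity
  have n2 : ∀ x ∈ Set.Ioi (0:ℝ), 0 ≤ x / (1 + x ^ 2) ^ 4 := by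
    intro x hx
    have hx' : (0:ℝ) < x := hx
    positivity
  have n3 : ∀ x ∈ Set.Ioi (0:ℝ), 0 ≤ 72 * x ^ 3 / ((1 + x ^ 2) ^ 6 * (2 * x ^ 2 + 5)) := by
    intro x hx
    have hx' : (0:ℝ) < x := hx
    positivity
  have I1 : IntegrableOn (fun x : ℝ => x * (1 - 3 * x ^ 2) ^ 2 / (1 + x ^ 2) ^ 6)
      (Set.Ioi 0) :=
    integrableOn_Ioi_deriv_of_nonneg' (fun x _ => hG1 x) n1 tG1
  have I2 : IntegrableOn (fun x : ℝ => x / (1 + x ^ 2) ^ 4) (Set.Ioi 0) :=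
    integrableOn_Ioi_deriv_of_nonneg' (fun x _ => hG2 x) n2 tG2
  have I3 : IntegrableOn (fun x : ℝ => 72 * x ^ 3 / ((1 + x ^ 2) ^ 6 * (2 * x ^ 2 + 5)))
      (Set.Ioi 0) :=
    integrableOn_Ioi_deriv_of_nonneg' (fun x _ => hG3 x) n3 tG3
  have E1 : (∫ x in Set.Ioi (0:ℝ), x * (1 - 3 * x ^ 2) ^ 2 / (1 + x ^ 2) ^ 6) = 1/10 := by
    rw [integral_Ioi_of_hasDerivAt_of_nonneg' (fun x _ => hG1 x) n1 tG1]
    norm_num [G1]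
  have E2 : (∫ x in Set.Ioi (0:ℝ), x / (1 + x ^ 2) ^ 4) = 1/6 := by
    rw [integral_Ioi_of_hasDerivAt_of_nonneg' (fun x _ => hG2 x) n2 tG2]
    norm_num [G2]
  have E3 : (∫ x in Set.Ioi (0:ℝ), 72 * x ^ 3 / ((1 + x ^ 2) ^ 6 * (2 * x ^ 2 + 5)))
      = (320/81) * Real.log 5 - (320/81) * Real.log 2 - 449/135 := by
    rw [integral_Ioi_of_hasDerivAt_of_nonneg' (fun x _ => hG3 x) n3 tG3]
    norm_num [G3]
    ring
  have h12 : (∫ r in Set.Ioi (0:ℝ), (r * (1 - 3 * r ^ 2) ^ 2 / (1 + r ^ 2) ^ 6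
      + r / (1 + r ^ 2) ^ 4)) = 1/10 + 1/6 := by
    rw [← E1, ← E2]
    exact MeasureTheory.integral_add I1 I2
  have hs : (∫ r in Set.Ioi (0 : ℝ),
        (r * (1 - 3 * r ^ 2) ^ 2 / (1 + r ^ 2) ^ 6
          + r / (1 + r ^ 2) ^ 4
          - 72 * r ^ 3 / ((1 + r ^ 2) ^ 6 * (2 * r ^ 2 + 5))))
      = (1/10 + 1/6) - ((320/81) * Real.log 5 - (320/81) * Real.log 2 - 449/135) := by
    rw [← h12, ← E3]
    exact MeasureTheory.integral_sub (I1.add I2) I3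
  rw [hs]
  have := log_bound
  linarith
end
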